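/- For f ∈ D(A_L) ∩ D(B_L) with Fourier-Hermite coefficients c_α, one has (2π)^{−2}‖A_L f‖₂² + (2π)²‖B_L f‖₂² ≥ ‖L‖²‖f‖₂². -/

import Mathlib

open MeasureTheory Real Finset

noncomputable section

/-- Euclidean norm of a vector in `Fin d → ℝ`. -/
def nrm {d : ℕ} (L : Fin d → ℝ) : ℝ := Real.sqrt (∑ i, L i ^ 2)

/-- Dot product on `Fin d → ℝ`. -/
def dotR {d : ℕ} (L x : Fin d → ℝ) : ℝ := ∑ i, L i * x i

/-- The position-type operator `A_L f (x) = 2π⟨L,x⟩ f(x)`. -/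
def opA {d : ℕ} (L : Fin d → ℝ) (f : (Fin d → ℝ) → ℂ) : (Fin d → ℝ) → ℂ :=
  fun x => ((2 * Real.pi * dotR L x : ℝ) : ℂ) * f x

/-- The momentum-type operator `B_L f (x) = (i/2π) ∂f/∂L (x)`. -/
def opB {d : ℕ} (L : Fin d → ℝ) (f : (Fin d → ℝ) → ℂ) : (Fin d → ℝ) → ℂ :=
  fun x => (Complex.I / (2 * Real.pi)) * fderiv ℝ f x L

/-- Squared `L²` norm. -/
def l2sq {d : ℕ} (g : (Fin d → ℝ) → ℂ) : ℝ := ∫ x, ‖g x‖ ^ 2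

/-- `L²` inner product. -/
def ip {d : ℕ} (g f : (Fin d → ℝ) → ℂ) : ℂ := ∫ x, g x * (starRingEnd ℂ) (f x)

/-- Variance of `f` with respect to an operator applied to `f` (given as `g = A f`). -/
def varOp {d : ℕ} (g f : (Fin d → ℝ) → ℂ) : ℝ :=
  l2sq g - ‖ip g f‖ ^ 2 / l2sq f

/-- The directional uncertainty product. -/
def UP {d : ℕ} (L : Fin d → ℝ) (f : (Fin d → ℝ) → ℂ) : ℝ :=
  varOp (opA L f) f * varOp (opB L f) f / (nrm L ^ 4 * l2sq f ^ 2)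

/-- Domain condition: `f ∈ L²`, `A_L f ∈ L²`, `f` differentiable with `B_L f ∈ L²`. -/
def InDom {d : ℕ} (L : Fin d → ℝ) (f : (Fin d → ℝ) → ℂ) : Prop :=
  MemLp f 2 (volume : Measure (Fin d → ℝ)) ∧ MemLp (opA L f) 2 volume ∧
    Differentiable ℝ f ∧ MemLp (opB L f) 2 volume

/-- The Fourier transform with kernel `e^{-2πi⟨x,ξ⟩}`. -/
def FT {d : ℕ} (f : (Fin d → ℝ) → ℂ) : (Fin d → ℝ) → ℂ :=
  fun ξ => ∫ x, Complex.exp (-2 * Real.pi * dotR x ξ * Complex.I) * f x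

end

noncomputable section

/-- product of two L² functions is integrable -/
lemma l2_mul_integrable {α : Type*} [MeasurableSpace α] {μ : Measure α} {g h : α → ℂ}
    (hg : MemLp g 2 μ) (hh : MemLp h 2 μ) :
    Integrable (fun x => g x * h x) μ := by
  rw [← memLp_one_iff_integrable]
  exact MemLp.smul (p := 2) (q := 2) (r := 1) hh hg

lemma memℒp_conj {α : Type*} [MeasurableSpace α] {μ : Measure α} {g : α → ℂ}
    (hg : MemLp g 2 μ) : MemLp (fun x => (starRingEnd ℂ) (g x)) 2 μ := by
  refine MemLp.of_le hg ?_ ?_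
  · exact Complex.continuous_conj.comp_aestronglyMeasurable hg.1
  · filter_upwards with x; simp

lemma l2_normSq_integrable {α : Type*} [MeasurableSpace α] {μ : Measure α} {g : α → ℂ}
    (hg : MemLp g 2 μ) : Integrable (fun x => Complex.normSq (g x)) μ := by
  have h := (l2_mul_integrable hg (memℒp_conj hg)).re
  simpa [Complex.mul_conj] using h

/-- the additive form of the uncertainty principle. -/
theorem additive_uncertainty_inequality {d : ℕ} (L : Fin d → ℝ)
    (f : (Fin d → ℝ) → ℂ) (hdom : InDom L f) :
    (2 * Real.pi) ^ (-2 : ℤ) * l2sq (opA L f) + (2 * Real.pi) ^ 2 * l2sq (opB L f)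
      ≥ nrm L ^ 2 * l2sq f := by
  obtain ⟨hf2, hA2, hdiff, hB2⟩ := hdom
  have hπ : (2 * Real.pi) ≠ 0 := by positivity
  have hπC : ((2 : ℂ) * (Real.pi : ℂ)) ≠ 0 := by
    simp [Real.pi_ne_zero]
  set P : (Fin d → ℝ) → ℝ := fun x => dotR L x with hPdef
  set D : (Fin d → ℝ) → ℂ := fun x => fderiv ℝ f x L with hDdef
  -- MemLp facts
  have hPf : MemLp (fun x => (P x : ℂ) * f x) 2 volume := by
    have heq : (fun x => (P x : ℂ) * f x)
        = fun x => (((2 * Real.pi)⁻¹ : ℝ) : ℂ) * opA L f x := by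
      funext x
      simp only [opA]
      push_cast
      field_simp
      ring
    rw [heq]
    exact hA2.const_mul _
  have hD : MemLp D 2 volume := by
    have heq : D = fun x => (((2 : ℂ) * (Real.pi : ℂ)) * (-Complex.I)) * opB L f x := by
      funext x
      simp only [opB, hDdef]
      field_simp
      ring_nf
      simp [Complex.I_sq]
    rw [heq]
    exact hB2.const_mul _
  -- integrability facts
  have hu_int : Integrable (fun x => Complex.normSq (f x)) volume := l2_normSq_integrable hf2
  have hint1 : Integrable (fun x => Complex.normSq ((P x : ℂ) * f x)) volume :=
    l2_normSq_integrable hPf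
  have hint2 : Integrable (fun x => Complex.normSq (D x)) volume := l2_normSq_integrable hD
  have hcross_int : Integrable
      (fun x => ((P x : ℂ) * f x * (starRingEnd ℂ) (D x)).re) volume :=
    (l2_mul_integrable hPf (memℒp_conj hD)).re
  have hPu_int : Integrable (fun x => P x * Complex.normSq (f x)) volume := by
    have h := (l2_mul_integrable hPf (memℒp_conj hf2)).re
    have heq : (fun x => ((P x : ℂ) * f x * (starRingEnd ℂ) (f x)).re)
        = fun x => P x * Complex.normSq (f x) := by
      funext x
      rw [mul_assoc, Complex.mul_conj]
      simp
    have h2 : Integrable (fun x => ((P x : ℂ) * f x * (starRingEnd ℂ) (f x)).re) volume := h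
    rwa [heq] at h2
  -- derivative of u = normSq f
  have hfD : ∀ x, HasFDerivAt f (fderiv ℝ f x) x := fun x => (hdiff x).hasFDerivAt
  set u : (Fin d → ℝ) → ℝ := fun x => Complex.normSq (f x) with hudef
  set u' : (Fin d → ℝ) → ((Fin d → ℝ) →L[ℝ] ℝ) := fun x =>
    (2 * (f x).re) • (Complex.reCLM.comp (fderiv ℝ f x)) +
      (2 * (f x).im) • (Complex.imCLM.comp (fderiv ℝ f x)) with hu'def
  have hu' : ∀ x, HasFDerivAt u (u' x) x := by
    intro x
    have hre : HasFDerivAt (fun y => (f y).re) (Complex.reCLM.comp (fderiv ℝ f x)) x :=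
      (Complex.reCLM.hasFDerivAt).comp x (hfD x)
    have him : HasFDerivAt (fun y => (f y).im) (Complex.imCLM.comp (fderiv ℝ f x)) x :=
      (Complex.imCLM.hasFDerivAt).comp x (hfD x)
    have h := (hre.mul hre).add (him.mul him)
    have hueq : u = fun y => (f y).re * (f y).re + (f y).im * (f y).im := by
      funext y; simp [hudef, Complex.normSq_apply]
    rw [hueq]
    refine HasFDerivAt.congr_fderiv h ?_
    ext y
    simp [hu'def]
    ring
  have hu'L : ∀ x, u' x L = 2 * (f x * (starRingEnd ℂ) (D x)).re := by
    intro x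
    simp [hu'def, Complex.mul_re]
    ring
  -- the linear functional x ↦ dotR L x
  set PL : (Fin d → ℝ) →L[ℝ] ℝ :=
    ∑ i, L i • (ContinuousLinearMap.proj i : ((Fin d → ℝ)) →L[ℝ] ℝ) with hPLdef
  have hPLapp : ∀ x, PL x = P x := by
    intro x
    simp [hPLdef, hPdef, dotR, ContinuousLinearMap.sum_apply]
  have hPfun : P = fun y => PL y := by funext y; rw [hPLapp]
  have hPdiff : ∀ x, HasFDerivAt P PL x := by
    intro x; rw [hPfun]; exact PL.hasFDerivAt
  have hPLL : PL L = nrm L ^ 2 := by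
    rw [hPLapp, hPdef]
    show dotR L L = nrm L ^ 2
    rw [dotR, nrm, Real.sq_sqrt (by positivity)]
    exact Finset.sum_congr rfl fun i _ => (pow_two (L i)).symm
  -- integration by parts
  have hIBP := integral_bilinear_hasFDerivAt_right_eq_neg_left_of_integrable
    (μ := (volume : Measure (Fin d → ℝ)))
    (B := ContinuousLinearMap.mul ℝ ℝ) (v := L)
    (f := P) (f' := fun _ => PL) (g := u) (g' := u')
    (by simpa [ContinuousLinearMap.mul_apply', hPLL] using hu_int.const_mul (nrm L ^ 2))
    (by
      have heq : (fun x => P x * u' x L)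
          = fun x => 2 * (((P x : ℂ) * f x) * (starRingEnd ℂ) (D x)).re := by
        funext x
        rw [hu'L x, mul_assoc, Complex.re_ofReal_mul]
        ring
      simpa [ContinuousLinearMap.mul_apply', heq] using hcross_int.const_mul 2)
    (by simpa [ContinuousLinearMap.mul_apply'] using hPu_int)
    (fun x _ => hPdiff x) (fun x _ => hu' x)
  simp only [ContinuousLinearMap.mul_apply', hPLL] at hIBP
  have key : ∫ x, 2 * (((P x : ℂ) * f x) * (starRingEnd ℂ) (D x)).re
      = -(nrm L ^ 2 * ∫ x, u x) := by
    have heq : (fun x => P x * u' x L)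
        = fun x => 2 * (((P x : ℂ) * f x) * (starRingEnd ℂ) (D x)).re := by
      funext x
      rw [hu'L x, mul_assoc, Complex.re_ofReal_mul]
      ring
    rw [← heq, hIBP, integral_const_mul]
  -- expansion of the square
  have hexp : ∫ x, Complex.normSq ((P x : ℂ) * f x + D x)
      = (∫ x, Complex.normSq ((P x : ℂ) * f x)) + (∫ x, Complex.normSq (D x))
        + ∫ x, 2 * (((P x : ℂ) * f x) * (starRingEnd ℂ) (D x)).re := by
    have heq : (fun x => Complex.normSq ((P x : ℂ) * f x + D x))
        = fun x => Complex.normSq ((P x : ℂ) * f x) + Complex.normSq (D x)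
            + 2 * (((P x : ℂ) * f x) * (starRingEnd ℂ) (D x)).re := by
      funext x; exact Complex.normSq_add _ _
    have i12 : Integrable (fun x => Complex.normSq ((P x : ℂ) * f x)
        + Complex.normSq (D x)) volume := hint1.add hint2
    have e1 : ∫ x, ((Complex.normSq ((P x : ℂ) * f x) + Complex.normSq (D x))
          + 2 * (((P x : ℂ) * f x) * (starRingEnd ℂ) (D x)).re)
        = (∫ x, (Complex.normSq ((P x : ℂ) * f x) + Complex.normSq (D x)))
          + ∫ x, 2 * (((P x : ℂ) * f x) * (starRingEnd ℂ) (D x)).re :=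
      integral_add i12 (hcross_int.const_mul 2)
    have e2 : ∫ x, (Complex.normSq ((P x : ℂ) * f x) + Complex.normSq (D x))
        = (∫ x, Complex.normSq ((P x : ℂ) * f x)) + ∫ x, Complex.normSq (D x) :=
      integral_add hint1 hint2
    rw [heq, e1, e2]
  have hpos : 0 ≤ ∫ x, Complex.normSq ((P x : ℂ) * f x + D x) :=
    integral_nonneg fun x => Complex.normSq_nonneg _
  rw [key] at hexp
  -- rewrite the goal
  have gA : (2 * Real.pi) ^ (-2 : ℤ) * l2sq (opA L f)
      = ∫ x, Complex.normSq ((P x : ℂ) * f x) := by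
    have hpt : (fun x => ‖opA L f x‖ ^ 2)
        = fun x => (2 * Real.pi) ^ 2 * Complex.normSq ((P x : ℂ) * f x) := by
      funext x
      rw [Complex.sq_norm]
      simp only [opA]
      rw [Complex.normSq_mul, Complex.normSq_mul, Complex.normSq_ofReal,
        Complex.normSq_ofReal]
      ring
    have h1 : (2 * Real.pi) ^ (-2 : ℤ) = ((2 * Real.pi) ^ 2)⁻¹ := by
      rw [zpow_neg, zpow_two, pow_two]
    rw [l2sq, hpt, integral_const_mul, ← mul_assoc, h1,
      inv_mul_cancel₀ (by positivity : (2 * Real.pi) ^ 2 ≠ 0), one_mul]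
  have gB : (2 * Real.pi) ^ 2 * l2sq (opB L f) = ∫ x, Complex.normSq (D x) := by
    have hpt : (fun x => ‖opB L f x‖ ^ 2)
        = fun x => ((2 * Real.pi) ^ 2)⁻¹ * Complex.normSq (D x) := by
      funext x
      rw [Complex.sq_norm]
      simp only [opB, Complex.normSq_mul, Complex.normSq_div, Complex.normSq_I]
      rw [show Complex.normSq 2 = 4 from by simp [Complex.normSq_apply]; norm_num,
        Complex.normSq_ofReal, show (fderiv ℝ f x) L = D x from rfl]
      have hpi := Real.pi_ne_zero
      field_simp
      ring_nf
    rw [l2sq, hpt, integral_const_mul, ← mul_assoc,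
      mul_inv_cancel₀ (by positivity), one_mul]
  have gF : l2sq f = ∫ x, u x := by
    rw [l2sq]
    congr 1
    funext x
    rw [Complex.sq_norm]
  rw [ge_iff_le, gA, gB, gF]
  linarith [hpos, hexp]


end
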